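/- Let A be a unital complex C*-algebra and N : A → [0,∞] a function such that: D = {x ∈ A : N(x) < ∞} is a linear subspace containing 1 on which N is a norm (subadditive, N(λx) = |λ|N(x), N(x) = 0 ⟹ x = 0), N(x*) = N(x) for all x, the set {x : N(x) ≤ 1} is compact in the norm of A, and the smallest closed *-subalgebra of A containing D is A itself. Define ε(r) = sup_{N(x) ≤ 1} inf_{N(y) ≤ r} ‖y − x*x‖ for r ≥ 0. Then D is norm-dense in A if and only if ε(r) → 0 as r → ∞. -/

import Mathlib

open scoped ENNReal NNReal

private lemma polar16 {A : Type*} [Ring A] [StarRing A] [Algebra ℂ A] [StarModule ℂ A]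
    (u v : A) :
    star u * v = (4:ℂ)⁻¹ • ((star (v+u) * (v+u))
      + Complex.I • (star (v + Complex.I • u) * (v + Complex.I • u))
      - (star (v - u) * (v - u))
      - Complex.I • (star (v - Complex.I • u) * (v - Complex.I • u))) := by
  simp only [star_add, star_sub, star_smul, mul_add, add_mul, sub_mul, mul_sub,
    smul_mul_assoc, mul_smul_comm, smul_smul, smul_add, smul_sub, Complex.star_def,
    Complex.conj_I]
  match_scalars <;> simp [Complex.ext_iff] <;> ring_nf

theorem stmt16 {A : Type*} [NormedRing A] [StarRing A] [CStarRing A] [NormedAlgebra ℂ A]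
    [CompleteSpace A] [StarModule ℂ A]
    (N : A → ℝ≥0∞)
    (hadd : ∀ x y : A, N (x + y) ≤ N x + N y)
    (hsmul : ∀ (c : ℂ) (x : A), N (c • x) = (‖c‖₊ : ℝ≥0∞) * N x)
    (hdef : ∀ x : A, N x = 0 → x = 0)
    (hone : N 1 < ⊤)
    (hstar : ∀ x : A, N (star x) = N x)
    (hcompact : IsCompact {x : A | N x ≤ 1})
    (hgen : ∀ B : StarSubalgebra ℂ A, IsClosed (B : Set A) →
      {x : A | N x < ⊤} ⊆ (B : Set A) → B = ⊤) :
    Dense {x : A | N x < ⊤} ↔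
      Filter.Tendsto
        (fun r : ℝ≥0 => ⨆ x : {x : A // N x ≤ 1},
          ⨅ y : {y : A // N y ≤ (r : ℝ≥0∞)}, (‖y.1 - star x.1 * x.1‖₊ : ℝ≥0∞))
        Filter.atTop (nhds 0) := by
  have hN0 : N 0 = 0 := by simpa using hsmul 0 0
  set D : Set A := {x : A | N x < ⊤} with hDdef
  have hD0 : (0:A) ∈ D := by simp [hDdef, hN0]
  constructor
  · -- Dense D → tendsto
    intro hdense
    rw [ENNReal.tendsto_nhds_zero]
    intro δ hδ
    obtain ⟨δ', hδ'0, hδ'le⟩ : ∃ δ' : ℝ≥0, 0 < δ' ∧ (δ' : ℝ≥0∞) ≤ δ := by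
      rcases eq_or_ne δ ⊤ with rfl | hne
      · exact ⟨1, one_pos, le_top⟩
      · exact ⟨δ.toNNReal, ENNReal.toNNReal_pos hδ.ne' hne,
          (ENNReal.coe_toNNReal hne).le⟩
    have hK' : IsCompact ((fun x : A => star x * x) '' {x : A | N x ≤ 1}) :=
      hcompact.image (continuous_star.mul continuous_id)
    have hcover : (fun x : A => star x * x) '' {x : A | N x ≤ 1} ⊆
        ⋃ y : D, Metric.ball (y : A) (δ' : ℝ) := by
      intro z _
      have hz : z ∈ closure D := hdense z
      obtain ⟨y, hyD, hdy⟩ := Metric.mem_closure_iff.1 hz (δ' : ℝ) (by exact_mod_cast hδ'0)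
      exact Set.mem_iUnion.2 ⟨⟨y, hyD⟩, Metric.mem_ball.2 hdy⟩
    obtain ⟨t, ht⟩ := hK'.elim_finite_subcover
      (fun y : D => Metric.ball (y : A) (δ' : ℝ)) (fun _ => Metric.isOpen_ball) hcover
    set r₀ : ℝ≥0 := t.sup fun i => (N (i : A)).toNNReal with hr₀
    refine Filter.eventually_atTop.2 ⟨r₀, fun r hr => le_trans (iSup_le fun x => ?_) hδ'le⟩
    have hx' : star (x : A) * (x : A) ∈ (fun x : A => star x * x) '' {x : A | N x ≤ 1} :=
      ⟨x, x.2, rfl⟩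
    obtain ⟨i, hit, hiball⟩ := Set.mem_iUnion₂.1 (ht hx')
    have hNi : N (i : A) ≤ (r : ℝ≥0∞) := by
      have h1 : N (i : A) = ((N (i : A)).toNNReal : ℝ≥0∞) :=
        (ENNReal.coe_toNNReal i.2.ne).symm
      rw [h1]
      exact_mod_cast le_trans (Finset.le_sup hit) hr
    refine le_trans (iInf_le _ ⟨(i : A), hNi⟩) ?_
    have : ‖(i : A) - star (x : A) * (x : A)‖ ≤ (δ' : ℝ) := by
      have := Metric.mem_ball.1 hiball
      rw [dist_eq_norm, norm_sub_rev] at this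
      exact this.le
    exact_mod_cast this
  · -- tendsto → Dense D
    intro hT
    -- submodule structure
    set M : Submodule ℂ A :=
      { carrier := D
        add_mem' := fun {a b} ha hb =>
          lt_of_le_of_lt (hadd a b) (ENNReal.add_lt_top.2 ⟨ha, hb⟩)
        zero_mem' := hD0
        smul_mem' := fun c x hx => by
          show N (c • x) < ⊤
          rw [hsmul]
          exact ENNReal.mul_lt_top ENNReal.coe_lt_top (show N x < ⊤ from hx) } with hM
    have hMc : ((M.topologicalClosure : Submodule ℂ A) : Set A) = closure D :=
      rfl
    -- squares of elements of D lie in the closure of D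
    have key1 : ∀ x : A, N x ≤ 1 → star x * x ∈ closure D := by
      intro x hx
      rw [Metric.mem_closure_iff]
      intro d hd
      have hδ : (0:ℝ≥0∞) < ENNReal.ofReal d := ENNReal.ofReal_pos.2 hd
      obtain ⟨r, hr⟩ := (hT.eventually (gt_mem_nhds hδ)).exists
      have h2 : (⨅ y : {y : A // N y ≤ (r:ℝ≥0∞)}, (‖y.1 - star x * x‖₊ : ℝ≥0∞))
          < ENNReal.ofReal d :=
        lt_of_le_of_lt (le_iSup (fun x' : {x' : A // N x' ≤ 1} =>
          ⨅ y : {y : A // N y ≤ (r:ℝ≥0∞)}, (‖y.1 - star x'.1 * x'.1‖₊ : ℝ≥0∞)) ⟨x, hx⟩) hr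
      obtain ⟨y, hy⟩ := iInf_lt_iff.1 h2
      refine ⟨y.1, lt_of_le_of_lt y.2 ENNReal.coe_lt_top, ?_⟩
      rw [← enorm_eq_nnnorm, ← ofReal_norm] at hy
      have := (ENNReal.ofReal_lt_ofReal_iff hd).1 hy
      rwa [dist_eq_norm, norm_sub_rev]
    have key2 : ∀ x ∈ D, star x * x ∈ closure D := by
      intro x hx
      rcases eq_or_ne x 0 with rfl | hx0
      · simpa using subset_closure hD0
      · have hNx0 : N x ≠ 0 := fun h => hx0 (hdef x h)
        set s : ℝ≥0 := (N x).toNNReal with hs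
        have hs0 : s ≠ 0 := by
          simp only [hs, ne_eq, ENNReal.toNNReal_eq_zero_iff]
          push_neg
          exact ⟨hNx0, hx.ne⟩
        have hNx : N x = (s : ℝ≥0∞) := (ENNReal.coe_toNNReal hx.ne).symm
        set c : ℂ := (((s : ℝ)⁻¹ : ℝ) : ℂ) with hc
        have hcnn : ‖c‖₊ = s⁻¹ := by
          rw [hc]
          simp [nnnorm_inv]
        have hc0 : c ≠ 0 := by
          simp [hc, NNReal.coe_eq_zero, hs0]
        have hz : N (c • x) ≤ 1 := by
          rw [hsmul, hcnn, hNx, ← ENNReal.coe_mul, inv_mul_cancel₀ hs0, ENNReal.coe_one]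
        have h1 := key1 _ hz
        have heq : star (c • x) * (c • x) = (starRingEnd ℂ c * c) • (star x * x) := by
          rw [star_smul]
          simp [smul_mul_assoc, mul_smul_comm, smul_smul, Complex.star_def, mul_comm]
        have hmem : (starRingEnd ℂ c * c)⁻¹ • (star (c • x) * (c • x)) ∈ closure D := by
          have := M.topologicalClosure.smul_mem ((starRingEnd ℂ c * c)⁻¹) h1
          exact this
        have hne : starRingEnd ℂ c * c ≠ 0 :=
          mul_ne_zero (by simpa using hc0) hc0
        rw [heq, smul_smul, inv_mul_cancel₀ hne, one_smul] at hmem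
        exact hmem
    have key3 : ∀ z ∈ closure D, star z * z ∈ closure D := by
      intro z hz
      have hcont : Continuous fun w : A => star w * w := continuous_star.mul continuous_id
      have h2 := image_closure_subset_closure_image (f := fun w : A => star w * w)
        (s := D) hcont
      have h3 : (fun w : A => star w * w) '' D ⊆ closure D := by
        rintro _ ⟨x, hx, rfl⟩
        exact key2 x hx
      exact closure_minimal h3 isClosed_closure (h2 ⟨z, hz, rfl⟩)
    have hstarclos : ∀ x ∈ closure D, star x ∈ closure D := by
      intro x hx
      have h2 := image_closure_subset_closure_image (f := fun w : A => star w)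
        (s := D) continuous_star
      have h3 : (fun w : A => star w) '' D ⊆ closure D := by
        rintro _ ⟨y, hy, rfl⟩
        refine subset_closure ?_
        show N (star y) < ⊤
        rwa [hstar]
      exact closure_minimal h3 isClosed_closure (h2 ⟨x, hx, rfl⟩)
    have hmul : ∀ a ∈ closure D, ∀ b ∈ closure D, a * b ∈ closure D := by
      intro a ha b hb
      have hu : star a ∈ closure D := hstarclos a ha
      have hab : a * b = star (star a) * b := by rw [star_star]
      rw [hab, polar16 (star a) b]
      -- memberships via the submodule closure
      have m1 : b + star a ∈ M.topologicalClosure := M.topologicalClosure.add_mem hb hu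
      have m2 : b + Complex.I • star a ∈ M.topologicalClosure :=
        M.topologicalClosure.add_mem hb (M.topologicalClosure.smul_mem _ hu)
      have m3 : b - star a ∈ M.topologicalClosure := M.topologicalClosure.sub_mem hb hu
      have m4 : b - Complex.I • star a ∈ M.topologicalClosure :=
        M.topologicalClosure.sub_mem hb (M.topologicalClosure.smul_mem _ hu)
      have q1 := key3 _ m1
      have q2 := key3 _ m2
      have q3 := key3 _ m3
      have q4 := key3 _ m4
      exact M.topologicalClosure.smul_mem _
        (M.topologicalClosure.sub_mem
          (M.topologicalClosure.sub_mem
            (M.topologicalClosure.add_mem q1 (M.topologicalClosure.smul_mem _ q2)) q3)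
          (M.topologicalClosure.smul_mem _ q4))
    set B : StarSubalgebra ℂ A :=
      { carrier := closure D
        mul_mem' := fun {a b} ha hb => hmul a ha b hb
        one_mem' := subset_closure (show N 1 < ⊤ from hone)
        add_mem' := fun {a b} ha hb => M.topologicalClosure.add_mem ha hb
        zero_mem' := subset_closure hD0
        algebraMap_mem' := fun c => by
          rw [Algebra.algebraMap_eq_smul_one]
          exact M.topologicalClosure.smul_mem c (subset_closure (show N 1 < ⊤ from hone))
        star_mem' := fun {a} ha => hstarclos a ha } with hB
    have hBtop := hgen B isClosed_closure subset_closure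
    rw [dense_iff_closure_eq]
    have : (B : Set A) = Set.univ := by rw [hBtop]; rfl
    exact this
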